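/- arXiv:2502.00052 — 3 statements merged into one kernel-verified Lean document; each statement's English description precedes it below -/
import Mathlib

section
/- Under the same setup, with Y uniform on K classes and l(y,y') = Δl·1{y=y'} + l0, the quantity HSIC(X,Y) := E[k(X,X')l(Y,Y')] - 2E[k(X,X')l(Y,Y'')] + E[k(X,X')]·E[l(Y,Y')] satisfies HSIC(X,Y) = (Δl/K)·(E[k(X,X') | Y = Y'] - E[k(X,X')]). -/
open MeasureTheory

/-- HSIC(X,Y) = (Δl/K)·(E[k(X,X') | Y = Y'] − E[k(X,X')]) for a two-valued label kernel
and `Y` uniform on `K` classes.  The conditioning event `{Y = Y'}` has probability `1/K`,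
so the conditional expectation is `K` times the restricted expectation. -/
theorem stmt7 {𝒳 : Type*} [MeasurableSpace 𝒳] {𝒴 : Type*} [Fintype 𝒴]
    [MeasurableSpace 𝒴] [MeasurableSingletonClass 𝒴] [DecidableEq 𝒴]
    (K : ℕ) (hK : Fintype.card 𝒴 = K) (hKpos : 0 < K)
    (μ : Measure (𝒳 × 𝒴)) [IsProbabilityMeasure μ]
    (hYunif : ∀ y : 𝒴, μ {p : 𝒳 × 𝒴 | p.2 = y} = 1 / (K : ENNReal))
    (Δl l0 : ℝ) (l : 𝒴 → 𝒴 → ℝ)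
    (hl : ∀ y y', l y y' = Δl * (if y = y' then (1 : ℝ) else 0) + l0)
    (k : 𝒳 → 𝒳 → ℝ) (hkm : Measurable (fun z : 𝒳 × 𝒳 => k z.1 z.2))
    (M : ℝ) (hkb : ∀ x x', |k x x'| ≤ M) :
    (∫ q, k q.1.1 q.2.1 * l q.1.2 q.2.2 ∂(μ.prod μ))
      - 2 * ((1 / (K : ℝ)) * ∑ y'' : 𝒴, ∫ q, k q.1.1 q.2.1 * l q.1.2 y'' ∂(μ.prod μ))
      + (∫ q, k q.1.1 q.2.1 ∂(μ.prod μ))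
        * ((1 / (K : ℝ)) * ∑ y'' : 𝒴, ∫ q, l q.1.2 y'' ∂(μ.prod μ)) =
    (Δl / K) *
      ((K : ℝ) * (∫ q, k q.1.1 q.2.1 * (if q.1.2 = q.2.2 then (1 : ℝ) else 0) ∂(μ.prod μ))
        - ∫ q, k q.1.1 q.2.1 ∂(μ.prod μ)) := by
  have hKR : (0:ℝ) < K := by exact_mod_cast hKpos
  set ν := μ.prod μ with hν
  have : IsProbabilityMeasure ν := by infer_instance
  -- measurability of k-part
  have hmk : Measurable (fun q : (𝒳×𝒴)×(𝒳×𝒴) => k q.1.1 q.2.1) :=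
    hkm.comp ((measurable_fst.fst).prodMk (measurable_snd.fst))
  have hik : Integrable (fun q : (𝒳×𝒴)×(𝒳×𝒴) => k q.1.1 q.2.1) ν := by
    refine (integrable_const M).mono' hmk.aestronglyMeasurable ?_
    exact Filter.Eventually.of_forall fun q => by simpa using hkb q.1.1 q.2.1
  -- indicator of diagonal
  have hsdiag : MeasurableSet {q : (𝒳×𝒴)×(𝒳×𝒴) | q.1.2 = q.2.2} :=
    measurableSet_eq_fun (measurable_fst.snd) (measurable_snd.snd)
  have hmdiag : Measurable (fun q : (𝒳×𝒴)×(𝒳×𝒴) => if q.1.2 = q.2.2 then (1:ℝ) else 0) :=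
    Measurable.ite hsdiag measurable_const measurable_const
  have hikdiag : Integrable (fun q : (𝒳×𝒴)×(𝒳×𝒴) =>
      k q.1.1 q.2.1 * (if q.1.2 = q.2.2 then (1:ℝ) else 0)) ν := by
    refine (integrable_const M).mono' (hmk.mul hmdiag).aestronglyMeasurable ?_
    refine Filter.Eventually.of_forall fun q => ?_
    have := hkb q.1.1 q.2.1
    by_cases h : q.1.2 = q.2.2 <;> simp [h, abs_mul, this] <;> nlinarith [abs_nonneg (k q.1.1 q.2.1)]
  have hiky : ∀ y'' : 𝒴, Integrable (fun q : (𝒳×𝒴)×(𝒳×𝒴) =>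
      k q.1.1 q.2.1 * (if q.1.2 = y'' then (1:ℝ) else 0)) ν := by
    intro y''
    have hm : Measurable (fun q : (𝒳×𝒴)×(𝒳×𝒴) => if q.1.2 = y'' then (1:ℝ) else 0) :=
      Measurable.ite (measurable_fst.snd (measurableSet_singleton y'')) measurable_const
        measurable_const
    refine (integrable_const M).mono' (hmk.mul hm).aestronglyMeasurable ?_
    refine Filter.Eventually.of_forall fun q => ?_
    have := hkb q.1.1 q.2.1
    by_cases h : q.1.2 = y'' <;> simp [h, abs_mul, this] <;> nlinarith [abs_nonneg (k q.1.1 q.2.1)]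
  set A := ∫ q, k q.1.1 q.2.1 ∂ν with hA
  set B := ∫ q, k q.1.1 q.2.1 * (if q.1.2 = q.2.2 then (1:ℝ) else 0) ∂ν with hB
  -- measure of slice
  have hslice : ∀ y'' : 𝒴, ν {q : (𝒳×𝒴)×(𝒳×𝒴) | q.1.2 = y''} = 1 / (K:ENNReal) := by
    intro y''
    have : {q : (𝒳×𝒴)×(𝒳×𝒴) | q.1.2 = y''} = {p : 𝒳×𝒴 | p.2 = y''} ×ˢ Set.univ := by
      ext q; simp [Set.mem_prod]
    rw [this, hν, Measure.prod_prod, hYunif, measure_univ, mul_one]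
  have hsliceR : ∀ y'' : 𝒴,
      (ν {q : (𝒳×𝒴)×(𝒳×𝒴) | q.1.2 = y''}).toReal = 1 / (K:ℝ) := by
    intro y''
    rw [hslice y'']
    simp [ENNReal.toReal_div]
  -- integral of slice indicator
  have hindint : ∀ y'' : 𝒴,
      (∫ q, (if q.1.2 = y'' then (1:ℝ) else 0) ∂ν) = 1 / (K:ℝ) := by
    intro y''
    have hs : MeasurableSet {q : (𝒳×𝒴)×(𝒳×𝒴) | q.1.2 = y''} :=
      measurable_fst.snd (measurableSet_singleton y'')
    have : (fun q : (𝒳×𝒴)×(𝒳×𝒴) => if q.1.2 = y'' then (1:ℝ) else 0)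
        = Set.indicator {q : (𝒳×𝒴)×(𝒳×𝒴) | q.1.2 = y''} (fun _ => (1:ℝ)) := by
      ext q; simp [Set.indicator_apply]
    rw [this, integral_indicator_const _ hs, measureReal_def, hsliceR y'']
    simp
  -- sum of k * indicators
  have hsumC : (∑ y'' : 𝒴, ∫ q, k q.1.1 q.2.1 * (if q.1.2 = y'' then (1:ℝ) else 0) ∂ν) = A := by
    rw [← integral_finset_sum _ (fun y'' _ => hiky y'')]
    congr 1
    ext q
    rw [← Finset.mul_sum]
    simp
  -- term (1)
  have h1 : (∫ q, k q.1.1 q.2.1 * l q.1.2 q.2.2 ∂ν) = Δl * B + l0 * A := by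
    simp only [hl]
    have : (fun q : (𝒳×𝒴)×(𝒳×𝒴) =>
        k q.1.1 q.2.1 * (Δl * (if q.1.2 = q.2.2 then (1:ℝ) else 0) + l0))
        = fun q => Δl * (k q.1.1 q.2.1 * (if q.1.2 = q.2.2 then (1:ℝ) else 0))
            + l0 * k q.1.1 q.2.1 := by ext q; ring
    rw [this, integral_add ((hikdiag.const_mul Δl)) (hik.const_mul l0),
      integral_const_mul, integral_const_mul]
  -- term (2)
  have h2 : ∀ y'' : 𝒴, (∫ q, k q.1.1 q.2.1 * l q.1.2 y'' ∂ν)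
      = Δl * (∫ q, k q.1.1 q.2.1 * (if q.1.2 = y'' then (1:ℝ) else 0) ∂ν) + l0 * A := by
    intro y''
    simp only [hl]
    have : (fun q : (𝒳×𝒴)×(𝒳×𝒴) =>
        k q.1.1 q.2.1 * (Δl * (if q.1.2 = y'' then (1:ℝ) else 0) + l0))
        = fun q => Δl * (k q.1.1 q.2.1 * (if q.1.2 = y'' then (1:ℝ) else 0))
            + l0 * k q.1.1 q.2.1 := by ext q; ring
    rw [this, integral_add (((hiky y'').const_mul Δl)) (hik.const_mul l0),
      integral_const_mul, integral_const_mul]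
  -- term (3)
  have h3 : ∀ y'' : 𝒴, (∫ q, l q.1.2 y'' ∂ν) = Δl * (1 / (K:ℝ)) + l0 := by
    intro y''
    simp only [hl]
    have hiI : Integrable (fun q : (𝒳×𝒴)×(𝒳×𝒴) => (if q.1.2 = y'' then (1:ℝ) else 0)) ν := by
      have hm : Measurable (fun q : (𝒳×𝒴)×(𝒳×𝒴) => if q.1.2 = y'' then (1:ℝ) else 0) :=
        Measurable.ite (measurable_fst.snd (measurableSet_singleton y'')) measurable_const
          measurable_const
      refine (integrable_const 1).mono' hm.aestronglyMeasurable ?_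
      refine Filter.Eventually.of_forall fun q => ?_
      by_cases h : q.1.2 = y'' <;> simp [h]
    rw [integral_add (hiI.const_mul Δl) (integrable_const l0), integral_const_mul,
      hindint y'', integral_const]
    simp
  -- assemble
  rw [h1]
  have hsum2 : (∑ y'' : 𝒴, ∫ q, k q.1.1 q.2.1 * l q.1.2 y'' ∂ν) = Δl * A + K * (l0 * A) := by
    simp only [h2]
    rw [Finset.sum_add_distrib, ← Finset.mul_sum, hsumC, Finset.sum_const]
    simp [hK]
  have hsum3 : (∑ y'' : 𝒴, ∫ q, l q.1.2 y'' ∂ν) = Δl + K * l0 := by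
    simp only [h3]
    rw [Finset.sum_const]
    simp [hK]
    field_simp
  rw [hsum2, hsum3]
  field_simp
  ring
end

section
/- Let k : X × X → R be bounded measurable with |k| ≤ M, μ a probability measure, τ > 0, and fix x ∈ X. Writing m(x) = E_{X'∼μ}[k(x,X')] and v(x) = Var_{X'∼μ}[k(x,X')], one has the second-order bound: |log E_{X'∼μ}[e^{k(x,X')/τ}] - m(x)/τ - v(x)/(2τ²)| ≤ C(M)/τ³ for some constant C(M) depending only on M (uniform in x, μ, and τ ≥ 1). -/
open MeasureTheory

lemma integrable_of_bound {X : Type} [MeasurableSpace X] {μ : Measure X} [IsFiniteMeasure μ]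
    {f : X → ℝ} (hf : Measurable f) (C : ℝ) (h : ∀ x, |f x| ≤ C) : Integrable f μ :=
  (integrable_const C).mono' hf.aestronglyMeasurable
    (Filter.Eventually.of_forall (fun x => by simpa using h x))

lemma abs_integral_le {X : Type} [MeasurableSpace X] {μ : Measure X} [IsProbabilityMeasure μ]
    (f : X → ℝ) (C : ℝ) (h : ∀ x, |f x| ≤ C) : |∫ x, f x ∂μ| ≤ C := by
  have := MeasureTheory.norm_integral_le_of_norm_le_const (μ := μ) (f := f) (C := C)
    (Filter.Eventually.of_forall (fun x => by simpa using h x))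
  simpa using this
open MeasureTheory

lemma abs_le_of_uIoc {s r : ℝ} (hr : r ∈ Set.uIoc 0 s) : |r| ≤ |s| := by
  rcases le_total 0 s with h | h
  · rw [Set.uIoc_of_le h] at hr
    rw [abs_of_pos hr.1, abs_of_nonneg h]; exact hr.2
  · rw [Set.uIoc_of_ge h] at hr
    rw [abs_of_nonpos hr.2, abs_of_nonpos h]
    linarith [hr.1]

lemma expL1 (s : ℝ) : |Real.exp s - 1| ≤ |s| * Real.exp |s| := by
  have h : Real.exp s - 1 = ∫ r in (0:ℝ)..s, Real.exp r := by
    rw [integral_exp, Real.exp_zero]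
  rw [h]
  have := intervalIntegral.norm_integral_le_of_norm_le_const
    (a := 0) (b := s) (C := Real.exp |s|) (f := Real.exp) ?_
  · simpa [abs_of_nonneg, mul_comm] using this
  · intro r hr
    rw [Real.norm_eq_abs, abs_of_pos (Real.exp_pos r)]
    exact (Real.exp_le_exp.2 (le_abs_self r)).trans (Real.exp_le_exp.2 (abs_le_of_uIoc hr))

lemma expL2 (s : ℝ) : |Real.exp s - 1 - s| ≤ |s|^2 * Real.exp |s| := by
  have h : Real.exp s - 1 - s = ∫ r in (0:ℝ)..s, (Real.exp r - 1) := by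
    rw [intervalIntegral.integral_sub (Real.continuous_exp.intervalIntegrable 0 s)
      (intervalIntegrable_const), integral_exp, Real.exp_zero,
      intervalIntegral.integral_const]
    simp only [smul_eq_mul, mul_one]
    ring
  rw [h]
  have := intervalIntegral.norm_integral_le_of_norm_le_const
    (a := 0) (b := s) (C := |s| * Real.exp |s|) (f := fun r => Real.exp r - 1) ?_
  · rw [Real.norm_eq_abs] at this
    calc _ ≤ |s| * Real.exp |s| * |s - 0| := this
    _ = |s|^2 * Real.exp |s| := by rw [sub_zero]; ring
  · intro r hr
    rw [Real.norm_eq_abs]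
    refine (expL1 r).trans ?_
    have h1 := abs_le_of_uIoc hr
    exact mul_le_mul h1 (Real.exp_le_exp.2 h1) (le_of_lt (Real.exp_pos _)) (abs_nonneg s)

lemma expL3 (s : ℝ) : |Real.exp s - 1 - s - s^2/2| ≤ |s|^3 * Real.exp |s| := by
  have h : Real.exp s - 1 - s - s^2/2 = ∫ r in (0:ℝ)..s, (Real.exp r - 1 - r) := by
    rw [intervalIntegral.integral_sub (f := fun r => Real.exp r - 1) (g := fun r => r) (((Real.continuous_exp.sub continuous_const)).intervalIntegrable 0 s)
      ((continuous_id' ).intervalIntegrable 0 s),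
      intervalIntegral.integral_sub (Real.continuous_exp.intervalIntegrable 0 s)
      (intervalIntegrable_const), integral_exp, Real.exp_zero,
      intervalIntegral.integral_const, integral_id]
    simp only [smul_eq_mul, mul_one]
    ring
  rw [h]
  have := intervalIntegral.norm_integral_le_of_norm_le_const
    (a := 0) (b := s) (C := |s|^2 * Real.exp |s|) (f := fun r => Real.exp r - 1 - r) ?_
  · rw [Real.norm_eq_abs] at this
    calc _ ≤ |s|^2 * Real.exp |s| * |s - 0| := this
    _ = |s|^3 * Real.exp |s| := by rw [sub_zero]; ring
  · intro r hr
    rw [Real.norm_eq_abs]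
    refine (expL2 r).trans ?_
    have h1 := abs_le_of_uIoc hr
    exact mul_le_mul (pow_le_pow_left₀ (abs_nonneg r) h1 2) (Real.exp_le_exp.2 h1)
      (le_of_lt (Real.exp_pos _)) (sq_nonneg _)

lemma log_quad {y c : ℝ} (hc : 0 < c) (hy : c ≤ y) : |Real.log y - (y - 1)| ≤ (y-1)^2 / c := by
  have hy0 : 0 < y := lt_of_lt_of_le hc hy
  have h1 : Real.log y ≤ y - 1 := Real.log_le_sub_one_of_pos hy0
  have h2 : Real.log (1/y) ≤ 1/y - 1 := Real.log_le_sub_one_of_pos (by positivity)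
  rw [one_div, Real.log_inv] at h2
  rw [abs_sub_comm, abs_of_nonneg (by linarith)]
  have h3 : y - 1 - Real.log y ≤ (y-1)^2 / y := by
    rw [le_div_iff₀ hy0]
    nlinarith [mul_le_mul_of_nonneg_right h2 (le_of_lt hy0), inv_mul_cancel₀ (ne_of_gt hy0)]
  refine h3.trans (div_le_div_of_nonneg_left (sq_nonneg _) hc hy)

/-- Second-order expansion of the log-partition term, with error `C(M)/τ³`
uniform in `x`, `μ` and `τ ≥ 1`. -/
theorem stmt9 (M : ℝ) (hM : 0 ≤ M) :
    ∃ C : ℝ, ∀ (X : Type) (mX : MeasurableSpace X) (μ : Measure X),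
      IsProbabilityMeasure μ →
      ∀ (k : X → X → ℝ), Measurable (fun z : X × X => k z.1 z.2) →
      (∀ x x', |k x x'| ≤ M) →
      ∀ τ : ℝ, 1 ≤ τ →
      ∀ x : X,
        |Real.log (∫ x', Real.exp (k x x' / τ) ∂μ)
            - (∫ x', k x x' ∂μ) / τ
            - (∫ x', (k x x' - ∫ x'', k x x'' ∂μ) ^ 2 ∂μ) / (2 * τ ^ 2)|
          ≤ C / τ ^ 3 := by
  set D : ℝ := 8*M^3*Real.exp (2*M) + 2*M^2 with hD
  have hD0 : 0 ≤ D := by positivity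
  refine ⟨D^2 * Real.exp (2*M) + 8*M^3*Real.exp (2*M), ?_⟩
  intro X mX μ hμ k hk hbd τ hτ x
  have hτ0 : (0:ℝ) < τ := lt_of_lt_of_le one_pos hτ
  have hτ2 : (0:ℝ) < τ^2 := by positivity
  have hτ3 : (0:ℝ) < τ^3 := by positivity
  have hτ23 : τ^2 ≤ τ^3 := pow_le_pow_right₀ hτ (by norm_num)
  have hτ34 : τ^3 ≤ τ^2 * τ^2 := by nlinarith
  have hgm : Measurable (fun x' => k x x') := hk.comp measurable_prodMk_left
  have hgint : Integrable (fun x' => k x x') μ := integrable_of_bound hgm M (hbd x)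
  set m : ℝ := ∫ x', k x x' ∂μ with hmdef
  have hm : |m| ≤ M := abs_integral_le _ M (hbd x)
  have hhm : Measurable (fun x' => k x x' - m) := hgm.sub measurable_const
  have hhbd : ∀ x', |k x x' - m| ≤ 2*M := fun x' => by
    have h1 := hbd x x'
    calc |k x x' - m| ≤ |k x x'| + |m| := abs_sub _ _
    _ ≤ 2*M := by linarith
  have hsbd : ∀ x', |(k x x' - m)/τ| ≤ 2*M/τ := fun x' => by
    rw [abs_div, abs_of_pos hτ0]
    exact div_le_div_of_nonneg_right (hhbd x') hτ0.le
  have h2Mτ : 2*M/τ ≤ 2*M := div_le_self (by linarith) hτ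
  have hsbd' : ∀ x', |(k x x' - m)/τ| ≤ 2*M := fun x' => (hsbd x').trans h2Mτ
  have hsm : Measurable (fun x' => Real.exp ((k x x' - m)/τ)) :=
    Real.measurable_exp.comp (hhm.div_const τ)
  have hJint : Integrable (fun x' => Real.exp ((k x x' - m)/τ)) μ := by
    refine integrable_of_bound hsm (Real.exp (2*M)) (fun x' => ?_)
    rw [abs_of_pos (Real.exp_pos _)]
    exact Real.exp_le_exp.2 ((le_abs_self _).trans (hsbd' x'))
  set J : ℝ := ∫ x', Real.exp ((k x x' - m)/τ) ∂μ with hJdef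
  have hJlb : Real.exp (-(2*M)) ≤ J := by
    have hp : ∀ x', Real.exp (-(2*M)) ≤ Real.exp ((k x x' - m)/τ) := fun x' =>
      Real.exp_le_exp.2 (neg_le_of_abs_le (hsbd' x'))
    calc Real.exp (-(2*M)) = ∫ _x', Real.exp (-(2*M)) ∂μ := by simp
    _ ≤ J := integral_mono (integrable_const _) hJint hp
  have hJpos : 0 < J := lt_of_lt_of_le (Real.exp_pos _) hJlb
  -- split the log
  have hsplit : (∫ x', Real.exp (k x x' / τ) ∂μ) = Real.exp (m/τ) * J := by
    rw [hJdef, ← integral_const_mul]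
    refine integral_congr_ae (Filter.Eventually.of_forall (fun x' => ?_))
    show Real.exp (k x x' / τ) = Real.exp (m/τ) * Real.exp ((k x x' - m)/τ)
    rw [← Real.exp_add]
    congr 1
    field_simp
    ring
  have hlog : Real.log (∫ x', Real.exp (k x x' / τ) ∂μ) = m/τ + Real.log J := by
    rw [hsplit, Real.log_mul (Real.exp_ne_zero _) (ne_of_gt hJpos), Real.log_exp]
  -- variance facts
  set v : ℝ := ∫ x', (k x x' - m)^2 ∂μ with hvdef
  have hsqbd : ∀ x', |(k x x' - m)^2| ≤ 4*M^2 := fun x' => by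
    rw [abs_of_nonneg (sq_nonneg _)]
    calc (k x x' - m)^2 = |k x x' - m|^2 := (sq_abs _).symm
    _ ≤ (2*M)^2 := pow_le_pow_left₀ (abs_nonneg _) (hhbd x') 2
    _ = 4*M^2 := by ring
  have hsqm : Measurable (fun x' => (k x x' - m)^2) := hhm.pow_const 2
  have hsqint : Integrable (fun x' => (k x x' - m)^2) μ :=
    integrable_of_bound hsqm (4*M^2) hsqbd
  have hv0 : 0 ≤ v := integral_nonneg (fun x' => sq_nonneg _)
  have hvub : v ≤ 4*M^2 := le_of_abs_le (abs_integral_le _ (4*M^2) hsqbd)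
  have hzero : ∫ x', (k x x' - m) ∂μ = 0 := by
    rw [integral_sub hgint (integrable_const m), integral_const]
    simp [hmdef]
  -- Taylor remainder step
  have hint1 : Integrable (fun x' => (k x x' - m)/τ) μ :=
    integrable_of_bound (hhm.div_const τ) (2*M) hsbd'
  have hint2 : Integrable (fun x' => ((k x x' - m)/τ)^2/2) μ := by
    refine integrable_of_bound ((hhm.div_const τ).pow_const 2 |>.div_const 2) (2*M^2) (fun x' => ?_)
    rw [abs_div, abs_of_nonneg (sq_nonneg _), abs_two]
    have : ((k x x' - m)/τ)^2 ≤ (2*M)^2 := by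
      rw [← sq_abs]; exact pow_le_pow_left₀ (abs_nonneg _) (hsbd' x') 2
    nlinarith
  have hA : Integrable (fun x' => Real.exp ((k x x' - m)/τ) - 1) μ := hJint.sub (integrable_const 1)
  have hB : Integrable (fun x' => Real.exp ((k x x' - m)/τ) - 1 - (k x x' - m)/τ) μ := hA.sub hint1
  have hRid : J - 1 - v/(2*τ^2)
      = ∫ x', (Real.exp ((k x x' - m)/τ) - 1 - (k x x' - m)/τ - ((k x x' - m)/τ)^2/2) ∂μ := by
    rw [integral_sub hB hint2, integral_sub hA hint1, integral_sub hJint (integrable_const 1)]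
    have e1 : ∫ (_x' : X), (1:ℝ) ∂μ = 1 := by simp
    have e2 : ∫ x', (k x x' - m)/τ ∂μ = 0 := by rw [integral_div, hzero, zero_div]
    have e3 : ∫ x', ((k x x' - m)/τ)^2/2 ∂μ = v/(2*τ^2) := by
      have : (fun x' => ((k x x' - m)/τ)^2/2) = fun x' => ((k x x' - m)^2/τ^2)/2 := by
        funext x'; rw [div_pow]
      rw [this, integral_div, integral_div, hvdef]
      ring
    rw [e1, e2, e3, hJdef]
    ring
  have hE : |J - 1 - v/(2*τ^2)| ≤ 8*M^3*Real.exp (2*M)/τ^3 := by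
    rw [hRid]
    refine abs_integral_le _ _ (fun x' => ?_)
    set s := (k x x' - m)/τ with hs
    calc |Real.exp s - 1 - s - s^2/2| ≤ |s|^3 * Real.exp |s| := expL3 s
    _ ≤ (2*M/τ)^3 * Real.exp (2*M) := by
        refine mul_le_mul (pow_le_pow_left₀ (abs_nonneg _) (hsbd x') 3)
          (Real.exp_le_exp.2 (hsbd' x')) (le_of_lt (Real.exp_pos _)) (by positivity)
    _ = 8*M^3*Real.exp (2*M)/τ^3 := by rw [div_pow]; ring
  have hu : |J - 1| ≤ D/τ^2 := by
    have h1 : |J - 1| ≤ |J - 1 - v/(2*τ^2)| + v/(2*τ^2) := by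
      have h := abs_add_le (J - 1 - v/(2*τ^2)) (v/(2*τ^2))
      rw [sub_add_cancel] at h
      exact h.trans (by rw [abs_of_nonneg (by positivity : (0:ℝ) ≤ v/(2*τ^2))])
    have h2 : 8*M^3*Real.exp (2*M)/τ^3 ≤ 8*M^3*Real.exp (2*M)/τ^2 :=
      div_le_div_of_nonneg_left (by positivity) hτ2 hτ23
    have h3 : v/(2*τ^2) ≤ 2*M^2/τ^2 := by
      rw [div_le_div_iff₀ (by positivity) hτ2]
      nlinarith
    calc |J - 1| ≤ 8*M^3*Real.exp (2*M)/τ^3 + v/(2*τ^2) := by linarith [hE]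
    _ ≤ 8*M^3*Real.exp (2*M)/τ^2 + 2*M^2/τ^2 := by linarith
    _ = D/τ^2 := by rw [hD]; ring
  have hlogJ : |Real.log J - (J - 1)| ≤ D^2 * Real.exp (2*M)/τ^3 := by
    have h1 : |Real.log J - (J - 1)| ≤ (J-1)^2 / Real.exp (-(2*M)) :=
      log_quad (Real.exp_pos _) hJlb
    have h2 : (J-1)^2 ≤ D^2/τ^2/τ^2 := by
      have := pow_le_pow_left₀ (abs_nonneg _) hu 2
      rw [sq_abs, div_pow] at this
      calc (J-1)^2 ≤ D^2/(τ^2)^2 := this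
      _ = D^2/τ^2/τ^2 := by ring
    have h1' : |Real.log J - (J - 1)| ≤ (J-1)^2 * Real.exp (2*M) := by
      refine h1.trans (le_of_eq ?_)
      rw [Real.exp_neg]
      field_simp
    refine h1'.trans ?_
    calc (J-1)^2 * Real.exp (2*M) ≤ (D^2/τ^2/τ^2) * Real.exp (2*M) :=
        mul_le_mul_of_nonneg_right h2 (Real.exp_pos _).le
    _ = D^2 * Real.exp (2*M)/(τ^2*τ^2) := by ring
    _ ≤ D^2 * Real.exp (2*M)/τ^3 := div_le_div_of_nonneg_left (by positivity) hτ3 hτ34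
  -- conclusion
  rw [hlog]
  have key : m/τ + Real.log J - m/τ - v/(2*τ^2) = (Real.log J - (J-1)) + (J - 1 - v/(2*τ^2)) := by
    ring
  rw [key]
  calc |(Real.log J - (J-1)) + (J - 1 - v/(2*τ^2))|
      ≤ |Real.log J - (J-1)| + |J - 1 - v/(2*τ^2)| := abs_add_le _ _
  _ ≤ D^2 * Real.exp (2*M)/τ^3 + 8*M^3*Real.exp (2*M)/τ^3 := by linarith [hlogJ, hE]
  _ = (D^2 * Real.exp (2*M) + 8*M^3*Real.exp (2*M))/τ^3 := by ring
end

section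
/- Let μ be a probability measure on X, k bounded measurable with |k| ≤ M, and τ ≥ 2M. Then for every x, the second-order expansion error satisfies: E_{X'∼μ}[e^{(k(x,X') - m(x))/τ}] lies between 1 + v(x)/(2τ²) - M³/τ³·e and 1 + v(x)/(2τ²) + M³/τ³·e, where m(x) = E_{X'∼μ}[k(x,X')] and v(x) = Var_{X'∼μ}[k(x,X')]. -/
open MeasureTheory

lemma taylor3 {t : ℝ} (ht : |t| ≤ 1) :
    |Real.exp t - (1 + t + t ^ 2 / 2)| ≤ |t| ^ 3 * (2 / 9) := by
  have h := Real.exp_bound ht (n := 3) (by norm_num)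
  have e : ∑ m ∈ Finset.range 3, t ^ m / m.factorial = 1 + t + t ^ 2 / 2 := by
    simp [Finset.sum_range_succ, Nat.factorial]
  have e2 : ((3 : ℕ).succ : ℝ) / ((3 : ℕ).factorial * 3) = 2 / 9 := by
    norm_num [Nat.factorial]
  rw [e] at h
  refine le_trans h (le_of_eq ?_)
  norm_num [Nat.factorial]

/-- Second-order bounds on the centered exponential moment for `τ ≥ 2M`. -/
theorem stmt19 {X : Type*} [MeasurableSpace X]
    (μ : Measure X) [IsProbabilityMeasure μ]
    (k : X → X → ℝ) (hkm : Measurable (fun z : X × X => k z.1 z.2))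
    (M : ℝ) (hkb : ∀ x x', |k x x'| ≤ M)
    (τ : ℝ) (hτpos : 0 < τ) (hτ : 2 * M ≤ τ) :
    ∀ x : X,
      (1 + (∫ x', (k x x' - ∫ x'', k x x'' ∂μ) ^ 2 ∂μ) / (2 * τ ^ 2)
          - M ^ 3 / τ ^ 3 * Real.exp 1
        ≤ ∫ x', Real.exp ((k x x' - ∫ x'', k x x'' ∂μ) / τ) ∂μ)
      ∧ (∫ x', Real.exp ((k x x' - ∫ x'', k x x'' ∂μ) / τ) ∂μ
        ≤ 1 + (∫ x', (k x x' - ∫ x'', k x x'' ∂μ) ^ 2 ∂μ) / (2 * τ ^ 2)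
          + M ^ 3 / τ ^ 3 * Real.exp 1) := by
  intro x
  have hM0 : 0 ≤ M := le_trans (abs_nonneg _) (hkb x x)
  set m : ℝ := ∫ x'', k x x'' ∂μ with hm_def
  have hmeas : Measurable (fun x' => k x x') :=
    hkm.comp (measurable_const.prodMk measurable_id)
  have hint_k : Integrable (fun x' => k x x') μ :=
    (integrable_const M).mono' hmeas.aestronglyMeasurable
      (Filter.Eventually.of_forall fun x' => by
        rw [Real.norm_eq_abs]; exact hkb x x')
  have hm : |m| ≤ M := by
    have : ‖∫ x'', k x x'' ∂μ‖ ≤ M * (μ Set.univ).toReal :=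
      norm_integral_le_of_norm_le_const (C := M)
        (Filter.Eventually.of_forall fun x' => by
          rw [Real.norm_eq_abs]; exact hkb x x')
    simpa [Real.norm_eq_abs] using this
  have hdev : ∀ x', |k x x' - m| ≤ 2 * M := fun x' => by
    calc |k x x' - m| ≤ |k x x'| + |m| := abs_sub _ _
      _ ≤ M + M := add_le_add (hkb x x') hm
      _ = 2 * M := by ring
  have ht1 : ∀ x', |(k x x' - m) / τ| ≤ 1 := fun x' => by
    rw [abs_div, abs_of_pos hτpos, div_le_one hτpos]
    exact le_trans (hdev x') hτ
  -- integrabilities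
  have hint_t : Integrable (fun x' => (k x x' - m) / τ) μ :=
    (hint_k.sub (integrable_const m)).div_const τ
  have hint_sq : Integrable (fun x' => (k x x' - m) ^ 2) μ := by
    refine (integrable_const ((2 * M) ^ 2)).mono'
      (((hmeas.sub measurable_const).pow_const 2).aestronglyMeasurable)
      (Filter.Eventually.of_forall fun x' => ?_)
    rw [Real.norm_eq_abs, abs_pow]
    exact pow_le_pow_left₀ (abs_nonneg _) (hdev x') 2
  have hsq2 : Integrable (fun x' => ((k x x' - m) / τ) ^ 2 / 2) μ := by
    have heq : (fun x' => ((k x x' - m) / τ) ^ 2 / 2)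
        = fun x' => (k x x' - m) ^ 2 * (1 / (τ ^ 2 * 2)) := by
      funext x'; rw [div_pow]; ring
    rw [heq]
    exact hint_sq.mul_const _
  have hint_poly : Integrable (fun x' => 1 + (k x x' - m) / τ + ((k x x' - m) / τ) ^ 2 / 2) μ :=
    ((integrable_const 1).add hint_t).add hsq2
  have hint_exp : Integrable (fun x' => Real.exp ((k x x' - m) / τ)) μ := by
    refine (integrable_const (Real.exp 1)).mono'
      ((hmeas.sub measurable_const).div_const τ).exp.aestronglyMeasurable
      (Filter.Eventually.of_forall fun x' => ?_)
    rw [Real.norm_eq_abs, abs_of_pos (Real.exp_pos _)]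
    exact Real.exp_le_exp.2 (le_trans (le_abs_self _) (ht1 x'))
  have hint_r : Integrable (fun x' => Real.exp ((k x x' - m) / τ)
      - (1 + (k x x' - m) / τ + ((k x x' - m) / τ) ^ 2 / 2)) μ := hint_exp.sub hint_poly
  -- integral of t is 0
  have htzero : ∫ x', (k x x' - m) / τ ∂μ = 0 := by
    rw [integral_div, integral_sub hint_k (integrable_const m), integral_const]
    simp [hm_def]
  -- integral of poly
  have hpoly : ∫ x', (1 + (k x x' - m) / τ + ((k x x' - m) / τ) ^ 2 / 2) ∂μ
      = 1 + (∫ x', (k x x' - m) ^ 2 ∂μ) / (2 * τ ^ 2) := by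
    have e1 : ∫ x', (1 + (k x x' - m) / τ + ((k x x' - m) / τ) ^ 2 / 2) ∂μ
        = (∫ x', (1 + (k x x' - m) / τ) ∂μ) + ∫ x', ((k x x' - m) / τ) ^ 2 / 2 ∂μ :=
      integral_add ((integrable_const 1).add hint_t) hsq2
    have e2 : ∫ x', (1 + (k x x' - m) / τ) ∂μ
        = (∫ _x', (1 : ℝ) ∂μ) + ∫ x', (k x x' - m) / τ ∂μ :=
      integral_add (integrable_const 1) hint_t
    have e3 : ∫ x', ((k x x' - m) / τ) ^ 2 / 2 ∂μ
        = (∫ x', (k x x' - m) ^ 2 ∂μ) * (1 / (τ ^ 2 * 2)) := by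
      have heq : (fun x' => ((k x x' - m) / τ) ^ 2 / 2)
          = fun x' => (k x x' - m) ^ 2 * (1 / (τ ^ 2 * 2)) := by
        funext x'; rw [div_pow]; ring
      rw [heq, integral_mul_const]
    rw [e1, e2, e3, htzero, integral_const]
    have hτ2 : τ ^ 2 ≠ 0 := pow_ne_zero _ (ne_of_gt hτpos)
    simp only [measure_univ, probReal_univ, ENNReal.toReal_one, smul_eq_mul, one_mul, add_zero]
    field_simp
  -- bound remainder integral
  have hrem : |∫ x', (Real.exp ((k x x' - m) / τ)
      - (1 + (k x x' - m) / τ + ((k x x' - m) / τ) ^ 2 / 2)) ∂μ| ≤ M ^ 3 / τ ^ 3 * Real.exp 1 := by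
    have hbd : ∀ x', ‖Real.exp ((k x x' - m) / τ)
        - (1 + (k x x' - m) / τ + ((k x x' - m) / τ) ^ 2 / 2)‖ ≤ M ^ 3 / τ ^ 3 * Real.exp 1 := by
      intro x'
      rw [Real.norm_eq_abs]
      calc |Real.exp ((k x x' - m) / τ) - (1 + (k x x' - m) / τ + ((k x x' - m) / τ) ^ 2 / 2)|
          ≤ |(k x x' - m) / τ| ^ 3 * (2 / 9) := taylor3 (ht1 x')
        _ ≤ (2 * M / τ) ^ 3 * (2 / 9) := by
            rw [abs_div, abs_of_pos hτpos]
            gcongr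
            exact hdev x'
        _ = M ^ 3 / τ ^ 3 * (16 / 9) := by field_simp; ring
        _ ≤ M ^ 3 / τ ^ 3 * Real.exp 1 := by
            apply mul_le_mul_of_nonneg_left _ (by positivity)
            have := Real.exp_one_gt_d9
            norm_num at this ⊢
            linarith
    calc |∫ x', (Real.exp ((k x x' - m) / τ)
        - (1 + (k x x' - m) / τ + ((k x x' - m) / τ) ^ 2 / 2)) ∂μ|
        ≤ (M ^ 3 / τ ^ 3 * Real.exp 1) * (μ Set.univ).toReal :=
          norm_integral_le_of_norm_le_const (Filter.Eventually.of_forall hbd)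
      _ = M ^ 3 / τ ^ 3 * Real.exp 1 := by simp
  -- put together
  have hdecomp : ∫ x', Real.exp ((k x x' - m) / τ) ∂μ
      = (∫ x', (Real.exp ((k x x' - m) / τ)
          - (1 + (k x x' - m) / τ + ((k x x' - m) / τ) ^ 2 / 2)) ∂μ)
        + (1 + (∫ x', (k x x' - m) ^ 2 ∂μ) / (2 * τ ^ 2)) := by
    rw [← hpoly, ← integral_add hint_r hint_poly]
    simp
  rw [abs_le] at hrem
  constructor <;> rw [hdecomp] <;> linarith [hrem.1, hrem.2]
end
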